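/- The function u(x,y) = (ℓ/2)·log(x² + y²) on the half-plane {(x,y) : y > 0} satisfies the minimal vertical graph equation (1 + y²u_x²)u_yy + (1 + y²u_y²)u_xx − 2y²u_x u_y u_xy − y u_y(u_x² + u_y²) = 0, for every real constant ℓ. -/

import Mathlib

noncomputable def px (u : ℝ → ℝ → ℝ) (x y : ℝ) : ℝ := deriv (fun x' => u x' y) x
noncomputable def py (u : ℝ → ℝ → ℝ) (x y : ℝ) : ℝ := deriv (fun y' => u x y') y
noncomputable def pxx (u : ℝ → ℝ → ℝ) (x y : ℝ) : ℝ := deriv (fun x' => px u x' y) x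
noncomputable def pyy (u : ℝ → ℝ → ℝ) (x y : ℝ) : ℝ := deriv (fun y' => py u x y') y
noncomputable def pxy (u : ℝ → ℝ → ℝ) (x y : ℝ) : ℝ := deriv (fun y' => px u x y') y

/-- The minimal vertical graph equation in the upper half-plane model of `ℍ²`. -/
def MinimalEqHalfPlane (u : ℝ → ℝ → ℝ) (x y : ℝ) : Prop :=
  (1 + y ^ 2 * (px u x y) ^ 2) * pyy u x y + (1 + y ^ 2 * (py u x y) ^ 2) * pxx u x y
    - 2 * y ^ 2 * px u x y * py u x y * pxy u x y
    - y * py u x y * ((px u x y) ^ 2 + (py u x y) ^ 2) = 0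

lemma hdx (ℓ a b : ℝ) (h : 0 < a ^ 2 + b ^ 2) :
    HasDerivAt (fun x' => (ℓ / 2) * Real.log (x' ^ 2 + b ^ 2)) (ℓ * a / (a ^ 2 + b ^ 2)) a := by
  have h1 : HasDerivAt (fun x' : ℝ => x' ^ 2 + b ^ 2) (2 * a) a := by
    simpa using (hasDerivAt_pow 2 a).add_const (b ^ 2)
  have h2 := ((Real.hasDerivAt_log h.ne').comp a h1).const_mul (ℓ / 2)
  refine h2.congr_deriv ?_
  ring

lemma hdy (ℓ a b : ℝ) (h : 0 < a ^ 2 + b ^ 2) :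
    HasDerivAt (fun y' => (ℓ / 2) * Real.log (a ^ 2 + y' ^ 2)) (ℓ * b / (a ^ 2 + b ^ 2)) b := by
  have h1 : HasDerivAt (fun y' : ℝ => a ^ 2 + y' ^ 2) (2 * b) b := by
    simpa using ((hasDerivAt_pow 2 b).const_add (a ^ 2))
  have h2 := ((Real.hasDerivAt_log h.ne').comp b h1).const_mul (ℓ / 2)
  refine h2.congr_deriv ?_
  ring

/-- `u(x,y) = (ℓ/2)·log(x² + y²)` satisfies the minimal vertical graph equation
on `{y > 0}`. -/
theorem stmt_8 (ℓ : ℝ) :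
    ∀ x y : ℝ, 0 < y →
      MinimalEqHalfPlane (fun x y => (ℓ / 2) * Real.log (x ^ 2 + y ^ 2)) x y := by
  intro x y hy
  set u : ℝ → ℝ → ℝ := fun x y => (ℓ / 2) * Real.log (x ^ 2 + y ^ 2) with hu
  have hpos : ∀ a : ℝ, (0 : ℝ) < a ^ 2 + y ^ 2 := fun a => by positivity
  -- first derivatives as functions
  have Epx : ∀ a b : ℝ, 0 < a ^ 2 + b ^ 2 → px u a b = ℓ * a / (a ^ 2 + b ^ 2) := by
    intro a b h
    exact (hdx ℓ a b h).deriv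
  have Epy : ∀ a b : ℝ, 0 < a ^ 2 + b ^ 2 → py u a b = ℓ * b / (a ^ 2 + b ^ 2) := by
    intro a b h
    exact (hdy ℓ a b h).deriv
  have hr : (x ^ 2 + y ^ 2) ≠ 0 := (hpos x).ne'
  -- pxx
  have hpxx : pxx u x y = ℓ * (y ^ 2 - x ^ 2) / (x ^ 2 + y ^ 2) ^ 2 := by
    have hfun : (fun x' => px u x' y) = fun x' => ℓ * x' / (x' ^ 2 + y ^ 2) := by
      funext a; exact Epx a y (hpos a)
    rw [pxx, hfun]
    have h1 : HasDerivAt (fun x' : ℝ => ℓ * x') ℓ x := by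
      simpa using (hasDerivAt_id x).const_mul ℓ
    have h2 : HasDerivAt (fun x' : ℝ => x' ^ 2 + y ^ 2) (2 * x) x := by
      simpa using (hasDerivAt_pow 2 x).add_const (y ^ 2)
    have := (h1.div h2 hr).deriv
    erw [this]
    field_simp
    ring
  -- pxy
  have hpxy : pxy u x y = -2 * ℓ * x * y / (x ^ 2 + y ^ 2) ^ 2 := by
    have hfun : (fun y' => px u x y') =ᶠ[nhds y] fun y' => ℓ * x / (x ^ 2 + y' ^ 2) := by
      filter_upwards [eventually_gt_nhds hy] with b hb
      exact Epx x b (by positivity)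
    rw [pxy, hfun.deriv_eq]
    have h1 : HasDerivAt (fun _ : ℝ => ℓ * x) 0 y := hasDerivAt_const y (ℓ * x)
    have h2 : HasDerivAt (fun y' : ℝ => x ^ 2 + y' ^ 2) (2 * y) y := by
      simpa using (hasDerivAt_pow 2 y).const_add (x ^ 2)
    have := (h1.div h2 hr).deriv
    erw [this]
    field_simp
    ring
  -- pyy
  have hpyy : pyy u x y = ℓ * (x ^ 2 - y ^ 2) / (x ^ 2 + y ^ 2) ^ 2 := by
    have hfun : (fun y' => py u x y') =ᶠ[nhds y] fun y' => ℓ * y' / (x ^ 2 + y' ^ 2) := by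
      filter_upwards [eventually_gt_nhds hy] with b hb
      exact Epy x b (by positivity)
    rw [pyy, hfun.deriv_eq]
    have h1 : HasDerivAt (fun y' : ℝ => ℓ * y') ℓ y := by
      simpa using (hasDerivAt_id y).const_mul ℓ
    have h2 : HasDerivAt (fun y' : ℝ => x ^ 2 + y' ^ 2) (2 * y) y := by
      simpa using (hasDerivAt_pow 2 y).const_add (x ^ 2)
    have := (h1.div h2 hr).deriv
    erw [this]
    field_simp
    ring
  show MinimalEqHalfPlane u x y
  rw [MinimalEqHalfPlane, hpxx, hpyy, hpxy, Epx x y (hpos x), Epy x y (hpos x)]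
  field_simp
  ring
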